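/- For pure-state channels S_x = |ψ_x⟩⟨ψ_x|, the sphere packing exponent satisfies E_sp^cc(R∞(P), P) ≤ R∞(P), where E_sp^cc(R,P) = sup_{ρ≥0}[E₀^cc(ρ,P) − ρR], E₀^cc(ρ,P) = min_F [−(1+ρ) Σ_x P(x) log Tr(S_x F^{ρ/(1+ρ)})], and R∞(P) = min_F [−Σ_x P(x) log Tr(S_x F)]. -/

import Mathlib

open Matrix
open scoped ComplexOrder

noncomputable def mpow {d : ℕ} (A : Matrix (Fin d) (Fin d) ℂ) (t : ℝ) : Matrix (Fin d) (Fin d) ℂ :=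
  cfc (fun x : ℝ => x ^ t) A

noncomputable def IsDensity {d : ℕ} (A : Matrix (Fin d) (Fin d) ℂ) : Prop :=
  A.PosSemidef ∧ A.trace = 1

def IsProb {Z : Type*} [Fintype Z] (P : Z → ℝ) : Prop :=
  (∀ z, 0 ≤ P z) ∧ ∑ z, P z = 1

lemma trace_vmv {d : ℕ} (ψ : Fin d → ℂ) (U : Matrix (Fin d) (Fin d) ℂ) (v : Fin d → ℝ) :
    (vecMulVec ψ (fun i => star (ψ i)) * (U * diagonal (fun k => (v k : ℂ)) * star U)).trace
      = ∑ k, (v k : ℂ) * Complex.normSq ((star U *ᵥ ψ) k) := by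
  have h : ∀ k, ((Complex.normSq ((star U *ᵥ ψ) k) : ℂ))
      = (∑ i, star (U i k) * ψ i) * (∑ j, U j k * star (ψ j)) := by
    intro k
    have : ((star U *ᵥ ψ) k) = ∑ i, star (U i k) * ψ i := by
      simp [mulVec, dotProduct, star_apply]
    rw [Complex.normSq_eq_conj_mul_self, this, map_sum]
    ring_nf
    simp [Finset.mul_sum, Finset.sum_mul, mul_comm, mul_left_comm]
  have hM : ∀ j i, (U * diagonal (fun k => (v k : ℂ)) * star U) j i
      = ∑ k, U j k * (v k : ℂ) * star (U i k) := by
    intro j i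
    simp [mul_apply, mul_diagonal, star_apply, Finset.sum_mul, diagonal_apply,
      Finset.sum_ite_eq, Finset.mem_univ, if_true]
  simp only [h, trace, diag, mul_apply, vecMulVec_apply, hM, star_apply,
    Finset.mul_sum, Finset.sum_mul]
  conv_lhs => enter [2, i]; rw [Finset.sum_comm]
  rw [Finset.sum_comm]
  apply Finset.sum_congr rfl; intro k _
  rw [Finset.sum_comm]
  apply Finset.sum_congr rfl; intro i _
  apply Finset.sum_congr rfl; intro j _
  simp only [diagonal_apply, mul_ite, mul_zero, ite_mul, zero_mul, Finset.sum_ite_eq,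
    Finset.sum_ite_eq', Finset.mem_univ, if_true]
  ring

lemma sum_normSq_mulVec {d : ℕ} (ψ : Fin d → ℂ) (U : Matrix (Fin d) (Fin d) ℂ)
    (hU2 : U * star U = 1) :
    ∑ k, Complex.normSq ((star U *ᵥ ψ) k) = ∑ i, Complex.normSq (ψ i) := by
  have h := trace_vmv ψ U (fun _ => (1:ℝ))
  simp only [Complex.ofReal_one, one_mul] at h
  rw [show diagonal (fun _ : Fin d => (1:ℂ)) = 1 from diagonal_one, mul_one, hU2, mul_one] at h
  have h2 : (vecMulVec ψ (fun i => star (ψ i))).trace = ∑ i, (Complex.normSq (ψ i) : ℂ) := by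
    simp [trace, diag, vecMulVec_apply, Complex.mul_conj]
  rw [h2] at h
  exact_mod_cast h.symm

lemma key_decomp {d : ℕ} {F : Matrix (Fin d) (Fin d) ℂ} (hF : F.PosSemidef) (htr : F.trace = 1)
    (ψ : Fin d → ℂ) (hψ : ∑ i, Complex.normSq (ψ i) = 1) :
    ∃ m lam : Fin d → ℝ,
      (∀ k, 0 ≤ m k) ∧ (∑ k, m k = 1) ∧ (∀ k, 0 ≤ lam k) ∧ (∑ k, lam k = 1) ∧
      (∀ f : ℝ → ℝ, (vecMulVec ψ (fun i => star (ψ i)) * cfc f F).trace.re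
          = ∑ k, f (lam k) * m k) := by
  have hH : F.IsHermitian := hF.1
  set U : Matrix (Fin d) (Fin d) ℂ := (hH.eigenvectorUnitary : Matrix (Fin d) (Fin d) ℂ) with hUdef
  have hU1 : star U * U = 1 := by
    exact (Unitary.mem_iff.mp hH.eigenvectorUnitary.2).1
  have hU2 : U * star U = 1 := by
    exact (Unitary.mem_iff.mp hH.eigenvectorUnitary.2).2
  refine ⟨fun k => Complex.normSq ((star U *ᵥ ψ) k), hH.eigenvalues,
    fun k => Complex.normSq_nonneg _, ?_, hF.eigenvalues_nonneg, ?_, ?_⟩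
  · rw [sum_normSq_mulVec ψ U hU2, hψ]
  · have hsp := hH.spectral_theorem
    have h1 : F.trace = ∑ k, ((hH.eigenvalues k : ℝ) : ℂ) := by
      conv_lhs => rw [hsp]
      rw [Unitary.conjStarAlgAut_apply, trace_mul_cycle, ← hUdef, hU1, one_mul, trace_diagonal]
      rfl
    rw [htr] at h1
    exact_mod_cast h1.symm
  · intro f
    have h1 : cfc f F = U * diagonal (fun k => ((f (hH.eigenvalues k) : ℝ) : ℂ)) * star U := by
      rw [hH.cfc_eq, Matrix.IsHermitian.cfc]
      rfl
    rw [h1, trace_vmv]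
    have h2 : (∑ k, ((f (hH.eigenvalues k) : ℝ) : ℂ) * (Complex.normSq ((star U *ᵥ ψ) k) : ℂ))
        = ((∑ k, f (hH.eigenvalues k) * Complex.normSq ((star U *ᵥ ψ) k) : ℝ) : ℂ) := by
      push_cast; rfl
    rw [h2, Complex.ofReal_re]

lemma scalar_log_le {d : ℕ} (s : ℝ) (hs0 : 0 ≤ s) (hs1 : s ≤ 1)
    (m lam : Fin d → ℝ) (hm : ∀ k, 0 ≤ m k) (hmsum : ∑ k, m k = 1)
    (hl : ∀ k, 0 ≤ lam k) (hlsum : ∑ k, lam k = 1) :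
    Real.log (∑ k, lam k * m k) ≤ Real.log (∑ k, lam k ^ s * m k)
      ∧ Real.log (∑ k, lam k ^ s * m k) ≤ 0 := by
  have hl1 : ∀ k, lam k ≤ 1 := fun k => by
    calc lam k ≤ ∑ j, lam j := Finset.single_le_sum (fun j _ => hl j) (Finset.mem_univ k)
    _ = 1 := hlsum
  have hb0 : 0 ≤ ∑ k, lam k * m k := Finset.sum_nonneg fun k _ => mul_nonneg (hl k) (hm k)
  have ha0 : 0 ≤ ∑ k, lam k ^ s * m k :=
    Finset.sum_nonneg fun k _ => mul_nonneg (Real.rpow_nonneg (hl k) s) (hm k)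
  have hba : ∑ k, lam k * m k ≤ ∑ k, lam k ^ s * m k := by
    apply Finset.sum_le_sum; intro k _
    apply mul_le_mul_of_nonneg_right _ (hm k)
    rcases eq_or_lt_of_le (hl k) with h | h
    · rw [← h]
      exact Real.rpow_nonneg le_rfl s
    · have h2 := Real.rpow_le_rpow_of_exponent_ge h (hl1 k) hs1
      rwa [Real.rpow_one] at h2
  have ha1 : ∑ k, lam k ^ s * m k ≤ 1 := by
    calc ∑ k, lam k ^ s * m k ≤ ∑ k, m k := Finset.sum_le_sum (fun k _ =>
          mul_le_of_le_one_left (hm k) (Real.rpow_le_one (hl k) (hl1 k) hs0))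
    _ = 1 := hmsum
  refine ⟨?_, Real.log_nonpos ha0 ha1⟩
  rcases eq_or_lt_of_le hb0 with hb | hb
  · rw [← hb, Real.log_zero]
    rcases eq_or_lt_of_le hs0 with hsz | hsz
    · have h1 : ∑ k, lam k ^ s * m k = 1 := by
        rw [← hmsum]
        apply Finset.sum_congr rfl; intro k _
        rw [← hsz, Real.rpow_zero, one_mul]
      rw [h1, Real.log_one]
    · have hz := (Finset.sum_eq_zero_iff_of_nonneg
        (fun k (_ : k ∈ Finset.univ) => mul_nonneg (hl k) (hm k))).mp hb.symm
      have h1 : ∑ k, lam k ^ s * m k = 0 := Finset.sum_eq_zero fun k hk => by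
        rcases mul_eq_zero.mp (hz k hk) with h | h
        · rw [h, Real.zero_rpow hsz.ne', zero_mul]
        · rw [h, mul_zero]
      rw [h1, Real.log_zero]
  · exact Real.log_le_log hb hba

/-- for a pure-state channel `S_x = |ψ_x⟩⟨ψ_x|`, the constant
composition sphere packing exponent satisfies `E_sp^cc(R∞(P), P) ≤ R∞(P)`, where
`E_sp^cc(R,P) = sup_{ρ≥0}[E₀^cc(ρ,P) − ρR]`,
`E₀^cc(ρ,P) = min_F [−(1+ρ) Σ_x P(x) log Tr(S_x F^{ρ/(1+ρ)})]` and
`R∞(P) = min_F [−Σ_x P(x) log Tr(S_x F)]`. -/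
theorem Espcc_at_Rinfty_le_Rinfty {X : Type*} [Fintype X] [Nonempty X]
    {d : ℕ} (hd : 0 < d)
    (ψ : X → Fin d → ℂ) (hψ : ∀ x, ∑ i, Complex.normSq (ψ x i) = 1)
    (S : X → Matrix (Fin d) (Fin d) ℂ)
    (hS : ∀ x, S x = vecMulVec (ψ x) (fun i => star (ψ x i)))
    (P : X → ℝ) (hP : IsProb P)
    (E0cc : ℝ → ℝ)
    (hE0cc : ∀ ρ : ℝ, E0cc ρ =
      ⨅ F : {F : Matrix (Fin d) (Fin d) ℂ // IsDensity F},
        -(1 + ρ) * ∑ x, P x * Real.log (((S x * mpow F.1 (ρ / (1 + ρ)))).trace.re))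
    (Rinf : ℝ)
    (hRinf : Rinf =
      ⨅ F : {F : Matrix (Fin d) (Fin d) ℂ // IsDensity F},
        -∑ x, P x * Real.log ((S x * F.1).trace.re)) :
    (⨆ ρ : {ρ : ℝ // 0 ≤ ρ}, (E0cc ρ.1 - ρ.1 * Rinf)) ≤ Rinf := by
  obtain ⟨hP0, hP1⟩ := hP
  have hd' : (d:ℂ) ≠ 0 := Nat.cast_ne_zero.mpr hd.ne'
  haveI : Nonempty {F : Matrix (Fin d) (Fin d) ℂ // IsDensity F} := by
    refine ⟨⟨diagonal (fun _ : Fin d => (d:ℂ)⁻¹), ?_, ?_⟩⟩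
    · refine posSemidef_diagonal_iff.mpr fun i => ?_
      rw [Complex.le_def]
      constructor
      · simp
      · simp
    · simp [Matrix.trace_diagonal, Finset.sum_const, mul_inv_cancel₀ hd']
  apply ciSup_le
  rintro ⟨ρ, hρ⟩
  show E0cc ρ - ρ * Rinf ≤ Rinf
  have h1ρ : (0:ℝ) < 1 + ρ := by linarith
  set s := ρ / (1 + ρ) with hsdef
  have hs0 : 0 ≤ s := div_nonneg hρ h1ρ.le
  have hs1 : s ≤ 1 := by
    rw [hsdef, div_le_one h1ρ]; linarith
  have main : ∀ F : {F : Matrix (Fin d) (Fin d) ℂ // IsDensity F},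
      (0 ≤ -(1+ρ) * ∑ x, P x * Real.log (((S x * mpow F.1 s)).trace.re)) ∧
      (-(1+ρ) * ∑ x, P x * Real.log (((S x * mpow F.1 s)).trace.re)
        ≤ (1+ρ) * (-∑ x, P x * Real.log ((S x * F.1).trace.re))) := by
    intro F
    have hx : ∀ x, Real.log ((S x * F.1).trace.re) ≤ Real.log ((S x * mpow F.1 s).trace.re)
        ∧ Real.log ((S x * mpow F.1 s).trace.re) ≤ 0 := by
      intro x
      obtain ⟨m, lam, hm, hmsum, hl, hlsum, hform⟩ := key_decomp F.2.1 F.2.2 (ψ x) (hψ x)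
      have e1 : (S x * F.1).trace.re = ∑ k, lam k * m k := by
        have h0 : S x * F.1 = vecMulVec (ψ x) (fun i => star (ψ x i)) * cfc (fun t : ℝ => t) F.1 := by
          rw [hS x, cfc_id' ℝ F.1 (show _root_.IsSelfAdjoint F.1 from F.2.1.1)]
        rw [h0]
        exact hform (fun t => t)
      have e2 : (S x * mpow F.1 s).trace.re = ∑ k, lam k ^ s * m k := by
        have h0 : S x * mpow F.1 s
            = vecMulVec (ψ x) (fun i => star (ψ x i)) * cfc (fun t : ℝ => t ^ s) F.1 := by
          rw [hS x]; rfl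
        rw [h0]
        exact hform (fun t => t ^ s)
      obtain ⟨hA, hB⟩ := scalar_log_le s hs0 hs1 m lam hm hmsum hl hlsum
      rw [e1, e2]
      exact ⟨hA, hB⟩
    have hsum1 : ∑ x, P x * Real.log ((S x * mpow F.1 s).trace.re) ≤ 0 :=
      Finset.sum_nonpos fun x _ => mul_nonpos_of_nonneg_of_nonpos (hP0 x) (hx x).2
    have hsum2 : ∑ x, P x * Real.log ((S x * F.1).trace.re)
        ≤ ∑ x, P x * Real.log ((S x * mpow F.1 s).trace.re) :=
      Finset.sum_le_sum fun x _ => mul_le_mul_of_nonneg_left (hx x).1 (hP0 x)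
    constructor
    · nlinarith
    · nlinarith [mul_nonneg h1ρ.le (sub_nonneg.mpr hsum2)]
  have hE : E0cc ρ ≤ (1+ρ) * Rinf := by
    have hbdd : BddBelow (Set.range fun F : {F : Matrix (Fin d) (Fin d) ℂ // IsDensity F} =>
        -(1+ρ) * ∑ x, P x * Real.log (((S x * mpow F.1 (ρ / (1 + ρ)))).trace.re)) := by
      refine ⟨0, ?_⟩
      rintro y ⟨F, rfl⟩
      exact (main F).1
    have h2 : ∀ F : {F : Matrix (Fin d) (Fin d) ℂ // IsDensity F},
        E0cc ρ ≤ (1+ρ) * (-∑ x, P x * Real.log ((S x * F.1).trace.re)) := by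
      intro F
      rw [hE0cc ρ]
      exact (ciInf_le hbdd F).trans (main F).2
    have h3 : E0cc ρ / (1+ρ) ≤ Rinf := by
      rw [hRinf]
      apply le_ciInf
      intro F
      rw [div_le_iff₀ h1ρ]
      have := h2 F
      linarith [this, mul_comm (1+ρ) (-∑ x, P x * Real.log ((S x * F.1).trace.re))]
    calc E0cc ρ = (E0cc ρ / (1+ρ)) * (1+ρ) := by field_simp
    _ ≤ Rinf * (1+ρ) := mul_le_mul_of_nonneg_right h3 h1ρ.le
    _ = (1+ρ) * Rinf := mul_comm _ _
  nlinarith [hE]
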